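/- Let N ≥ 3 be an integer and p ∈ (N/(N-2), (N+2)/(N-2)). Then (2p/(p-1))·(N-2-2/(p-1)) ≤ (N-2)²/4 if and only if p ≤ p_c, and equality holds if and only if p = p_c. In particular, for p ∈ (N/(N-2), p_c] one has p·c_p^{p-1} ≤ (N-2)²/4 with equality only at p = p_c, and for p ∈ (p_c, (N+2)/(N-2)) one has (2p/(p-1))·(N-2-2/(p-1)) > (N-2)²/4. -/

import Mathlib

open Real MeasureTheory Filter Metric Set

noncomputable section

/-- The Euclidean Laplacian, as the sum of second directional derivatives along the
coordinate axes. -/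
def lap {N : ℕ} (u : EuclideanSpace ℝ (Fin N) → ℝ) (x : EuclideanSpace ℝ (Fin N)) : ℝ :=
  ∑ i : Fin N,
    fderiv ℝ (fun y => fderiv ℝ u y (EuclideanSpace.single i (1:ℝ))) x
      (EuclideanSpace.single i (1:ℝ))

/-- `f` is locally Hölder continuous on `s`. -/
def LocHolderOn {N : ℕ} (f : EuclideanSpace ℝ (Fin N) → ℝ)
    (s : Set (EuclideanSpace ℝ (Fin N))) : Prop :=
  ∀ x ∈ s, ∃ (C α : NNReal) (r : ℝ), 0 < r ∧ 0 < α ∧ α ≤ 1 ∧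
    HolderOnWith C α f (Metric.ball x r ∩ s)

/-- The constant `c_p = ((2/(p-1))(N-2-2/(p-1)))^{1/(p-1)}`. -/
def cp (N : ℕ) (p : ℝ) : ℝ := (2 / (p - 1) * ((N:ℝ) - 2 - 2 / (p - 1))) ^ (1 / (p - 1))

/-- The Joseph–Lundgren exponent `p_c = 1 + 4/(N-4+2√(N-1))`. -/
def pc (N : ℕ) : ℝ := 1 + 4 / ((N:ℝ) - 4 + 2 * Real.sqrt ((N:ℝ) - 1))

/-- The exponent `τ_p^*`. -/
def tauStar (N : ℕ) (p : ℝ) : ℝ :=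
  (2 / (p - 1) - ((N:ℝ) - 2) / 2) -
    Real.sqrt ((2 / (p - 1) - ((N:ℝ) - 2) / 2) ^ 2 - 2 * ((N:ℝ) - 2 - 2 / (p - 1)))

/-- The surface measure `σ_{N-1}` of the unit sphere in `ℝ^N`,
expressed as `N` times the volume of the unit ball. -/
def sphereArea (N : ℕ) : ℝ :=
  (N : ℝ) * (volume (Metric.ball (0 : EuclideanSpace ℝ (Fin N)) 1)).toReal

/-- The normalizing constant `c_N = 1/((N-2)σ_{N-1})` of the fundamental solution of `-Δ`. -/
def cGreen (N : ℕ) : ℝ := 1 / (((N:ℝ) - 2) * sphereArea N)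

/-- `u` is a `ν`-fast decaying solution of `-Δ u = V u^p` in `ℝ^N \ {0}`. -/
def FastDecaySol (N : ℕ) (p : ℝ) (V u : EuclideanSpace ℝ (Fin N) → ℝ) (ν : ℝ) : Prop :=
  ContDiffOn ℝ 2 u {0}ᶜ ∧ (∀ x : EuclideanSpace ℝ (Fin N), x ≠ 0 → 0 < u x) ∧
  (∀ x : EuclideanSpace ℝ (Fin N), x ≠ 0 → -lap u x = V x * u x ^ p) ∧
  Tendsto (fun x : EuclideanSpace ℝ (Fin N) => u x * ‖x‖ ^ ((N:ℝ) - 2))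
    (Filter.comap (fun x => ‖x‖) Filter.atTop) (nhds ν)

/-- `u(x)|x|^{2/(p-1)} → c_p` as `x → 0`. -/
def SingAtOrigin (N : ℕ) (p : ℝ) (u : EuclideanSpace ℝ (Fin N) → ℝ) : Prop :=
  Tendsto (fun x : EuclideanSpace ℝ (Fin N) => u x * ‖x‖ ^ (2 / (p - 1)))
    (nhdsWithin 0 {0}ᶜ) (nhds (cp N p))

/-- Condition `(V₀)` with parameters `c₀, τ₀, c_∞, β`. -/
def V0cond (N : ℕ) (V : EuclideanSpace ℝ (Fin N) → ℝ) (c₀ τ₀ cinf β : ℝ) : Prop :=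
  LocHolderOn V {0}ᶜ ∧ 0 < c₀ ∧ 0 < τ₀ ∧
  (∀ x : EuclideanSpace ℝ (Fin N), x ≠ 0 → ‖x‖ ≤ 1 → |V x - 1| ≤ c₀ * ‖x‖ ^ τ₀) ∧
  1 ≤ cinf ∧
  ∀ x : EuclideanSpace ℝ (Fin N), x ≠ 0 → 0 ≤ V x ∧ V x ≤ cinf * (1 + ‖x‖) ^ β

set_option maxHeartbeats 1000000 in
/-- Proposition 2.1 (Joseph–Lundgren dichotomy). -/
theorem statement_3 (N : ℕ) (hN : 3 ≤ N) (p : ℝ)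
    (hp : p ∈ Set.Ioo ((N:ℝ) / ((N:ℝ) - 2)) (((N:ℝ) + 2) / ((N:ℝ) - 2))) :
    ((2 * p / (p - 1)) * ((N:ℝ) - 2 - 2 / (p - 1)) ≤ ((N:ℝ) - 2) ^ 2 / 4 ↔ p ≤ pc N) ∧
    ((2 * p / (p - 1)) * ((N:ℝ) - 2 - 2 / (p - 1)) = ((N:ℝ) - 2) ^ 2 / 4 ↔ p = pc N) ∧
    (p ≤ pc N →
      p * cp N p ^ (p - 1) ≤ ((N:ℝ) - 2) ^ 2 / 4 ∧
      (p * cp N p ^ (p - 1) = ((N:ℝ) - 2) ^ 2 / 4 → p = pc N)) ∧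
    (pc N < p →
      (2 * p / (p - 1)) * ((N:ℝ) - 2 - 2 / (p - 1)) > ((N:ℝ) - 2) ^ 2 / 4) := by
  obtain ⟨hpl, hpu⟩ := hp
  have hN3 : (3:ℝ) ≤ (N:ℝ) := by exact_mod_cast hN
  have hN2' : (0:ℝ) < (N:ℝ) - 2 := by linarith
  have hp1 : 1 < p := by
    have h1 : (1:ℝ) < (N:ℝ) / ((N:ℝ) - 2) := by rw [lt_div_iff₀ hN2']; linarith
    linarith
  have hp1' : 0 < p - 1 := by linarith
  set t := 2 / (p - 1) with ht_def
  have ht0 : 0 < t := by positivity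
  have hthi : t < (N:ℝ) - 2 := by
    have h1 : 2 / ((N:ℝ) - 2) < p - 1 := by
      have h2 : (N:ℝ) / ((N:ℝ) - 2) - 1 = 2 / ((N:ℝ) - 2) := by field_simp; ring
      linarith
    rw [div_lt_iff₀ hN2'] at h1
    rw [ht_def, div_lt_iff₀ hp1']
    nlinarith
  have htlo : ((N:ℝ) - 2) / 2 < t := by
    have h1 : p - 1 < 4 / ((N:ℝ) - 2) := by
      have h2 : ((N:ℝ) + 2) / ((N:ℝ) - 2) - 1 = 4 / ((N:ℝ) - 2) := by field_simp; ring
      linarith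
    rw [lt_div_iff₀ hN2'] at h1
    rw [ht_def, lt_div_iff₀ hp1']
    nlinarith
  set s := Real.sqrt ((N:ℝ) - 1) with hs_def
  have hs2 : s ^ 2 = (N:ℝ) - 1 := Real.sq_sqrt (by linarith)
  have hs0 : 0 ≤ s := Real.sqrt_nonneg _
  have hs1 : 1 < s := by nlinarith
  set tc := ((N:ℝ) - 4 + 2 * s) / 2 with htc_def
  have htc0 : 0 < tc := by rw [htc_def]; linarith
  have hpc : pc N = 1 + 2 / tc := by
    rw [pc, ← hs_def, htc_def, div_div_eq_mul_div]
    ring_nf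
  have hp_eq : p = 1 + 2 / t := by rw [ht_def]; field_simp; ring
  have h2p : 2 * p / (p - 1) = t + 2 := by rw [ht_def]; field_simp; ring
  have key : ((N:ℝ) - 2) ^ 2 / 4 - (2 * p / (p - 1)) * ((N:ℝ) - 2 - t)
      = (t - tc) * (t - ((N:ℝ) - 4 - 2 * s) / 2) := by
    rw [h2p, htc_def]; linear_combination hs2
  have hfac : 0 < t - ((N:ℝ) - 4 - 2 * s) / 2 := by linarith
  have hiff_t : p ≤ pc N ↔ tc ≤ t := by
    rw [hpc, hp_eq]
    constructor
    · intro h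
      have h2 : 2 / t ≤ 2 / tc := by linarith
      rw [div_le_div_iff₀ ht0 htc0] at h2
      linarith
    · intro h
      have h2 : 2 / t ≤ 2 / tc := by rw [div_le_div_iff₀ ht0 htc0]; linarith
      linarith
  have heq_t : p = pc N ↔ t = tc := by
    rw [hpc, hp_eq]
    constructor
    · intro h
      have h2 : 2 / t = 2 / tc := by linarith
      rw [div_eq_div_iff ht0.ne' htc0.ne'] at h2
      linarith
    · intro h; rw [h]
  have part1 : (2 * p / (p - 1)) * ((N:ℝ) - 2 - t) ≤ ((N:ℝ) - 2) ^ 2 / 4 ↔ p ≤ pc N := by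
    rw [hiff_t]
    constructor
    · intro h; nlinarith
    · intro h; nlinarith
  have part2 : (2 * p / (p - 1)) * ((N:ℝ) - 2 - t) = ((N:ℝ) - 2) ^ 2 / 4 ↔ p = pc N := by
    rw [heq_t]
    constructor
    · intro h
      have h0 : (t - tc) * (t - ((N:ℝ) - 4 - 2 * s) / 2) = 0 := by linarith
      rcases mul_eq_zero.1 h0 with h1 | h1
      · linarith
      · linarith
    · intro h
      have h0 : (t - tc) * (t - ((N:ℝ) - 4 - 2 * s) / 2) = 0 := by rw [h]; ring
      linarith
  have hA : cp N p ^ (p - 1) = t * ((N:ℝ) - 2 - t) := by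
    have hApos : (0:ℝ) ≤ 2 / (p - 1) * ((N:ℝ) - 2 - 2 / (p - 1)) := by
      rw [← ht_def]
      exact (mul_pos ht0 (by linarith)).le
    rw [cp, ← Real.rpow_mul hApos, one_div_mul_cancel (ne_of_gt hp1'), Real.rpow_one, ← ht_def]
  have hpcp : p * cp N p ^ (p - 1) = (2 * p / (p - 1)) * ((N:ℝ) - 2 - t) := by
    rw [hA, h2p, ht_def]
    field_simp
    ring
  refine ⟨part1, part2, ?_, ?_⟩
  · intro hle
    constructor
    · rw [hpcp]; exact part1.2 hle
    · intro heq
      rw [hpcp] at heq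
      exact part2.1 heq
  · intro hlt
    have h1 : ¬ ((2 * p / (p - 1)) * ((N:ℝ) - 2 - t) ≤ ((N:ℝ) - 2) ^ 2 / 4) := by
      rw [part1]; linarith
    linarith [lt_of_not_ge h1]
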